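/- Let S_n = { F ⊆ ℕ : F is finite and nonempty, min F ≥ |F|, and max F = n }. Then |S_1| = 1, |S_2| = 1, and for all positive integers n, |S_{n+2}| = |S_{n+1}| + |S_n|; consequently the sequence (|S_n|) is the Fibonacci sequence. -/
import Mathlib


/-- `S n` is the collection of Schreier sets with maximum element `n`:
finite nonempty sets `F ⊆ ℕ` with `min F ≥ |F|` and `max F = n`. -/
def S (n : ℕ) : Set (Finset ℕ) :=
  {F | ∃ h : F.Nonempty, F.min' h ≥ F.card ∧ F.max' h = n}

lemma S_subset {n : ℕ} {F : Finset ℕ} (hF : F ∈ S n) : F ⊆ Finset.range (n + 1) := by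
  obtain ⟨h, _, hmax⟩ := hF
  intro x hx
  rw [Finset.mem_range, Nat.lt_succ_iff, ← hmax]
  exact Finset.le_max' _ _ hx

lemma S_finite (n : ℕ) : (S n).Finite := by
  apply Set.Finite.subset ((Finset.range (n + 1)).powerset : Finset (Finset ℕ)).finite_toSet
  intro F hF
  exact Finset.mem_coe.mpr (Finset.mem_powerset.mpr (S_subset hF))

lemma S_card_le {n : ℕ} {F : Finset ℕ} (hF : F ∈ S n) : 2 * F.card ≤ n + 1 := by
  obtain ⟨h, hmin, hmax⟩ := hF
  have hsub : F ⊆ Finset.Icc F.card n := by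
    intro x hx
    rw [Finset.mem_Icc]
    exact ⟨le_trans hmin (F.min'_le x hx), hmax ▸ Finset.le_max' _ _ hx⟩
  have := Finset.card_le_card hsub
  rw [Nat.card_Icc] at this
  omega

lemma S_one : S 1 = {({1} : Finset ℕ)} := by
  ext F
  simp only [Set.mem_singleton_iff]
  constructor
  · rintro hF
    obtain ⟨h, hmin, hmax⟩ := hF
    have hsub := S_subset ⟨h, hmin, hmax⟩
    ext x
    simp only [Finset.mem_singleton]
    constructor
    · intro hx
      have h1 : x ≤ 1 := by have := hsub hx; simpa [Nat.lt_succ_iff] using this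
      have h2 : 1 ≤ x := le_trans (le_trans h.card_pos hmin) (F.min'_le x hx)
      omega
    · intro hx
      subst hx
      exact hmax ▸ F.max'_mem h
  · rintro rfl
    exact ⟨⟨1, by simp⟩, by simp, by simp⟩

lemma S_two : S 2 = {({2} : Finset ℕ)} := by
  ext F
  simp only [Set.mem_singleton_iff]
  constructor
  · rintro hF
    obtain ⟨h, hmin, hmax⟩ := hF
    have hcard := S_card_le ⟨h, hmin, hmax⟩
    have hc1 : F.card = 1 := by have := h.card_pos; omega
    have h2 : (2 : ℕ) ∈ F := hmax ▸ F.max'_mem h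
    exact Finset.eq_singleton_iff_unique_mem.mpr ⟨h2, fun x hx => by
      have := Finset.card_eq_one.mp hc1
      obtain ⟨a, rfl⟩ := this
      simp at hx h2; omega⟩
  · rintro rfl
    exact ⟨⟨2, by simp⟩, by simp, by simp⟩

lemma S_rec (n : ℕ) : (S (n + 2)).ncard = (S (n + 1)).ncard + (S n).ncard := by
  classical
  set A : Set (Finset ℕ) := {F | F ∈ S (n + 2) ∧ (n + 1) ∉ F} with hA_def
  set B : Set (Finset ℕ) := {F | F ∈ S (n + 2) ∧ (n + 1) ∈ F} with hB_def
  have hunion : S (n + 2) = A ∪ B := by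
    ext F; simp only [hA_def, hB_def, Set.mem_union, Set.mem_setOf_eq]; tauto
  have hdisj : Disjoint A B := by
    rw [Set.disjoint_left]; rintro F ⟨_, h1⟩ ⟨_, h2⟩; exact h1 h2
  have hAfin : A.Finite := (S_finite (n + 2)).subset (fun F hF => hF.1)
  have hBfin : B.Finite := (S_finite (n + 2)).subset (fun F hF => hF.1)
  -- bijection S (n+1) → A
  have hA : A = (fun F => insert (n + 2) (F.erase (n + 1))) '' (S (n + 1)) := by
    ext F
    constructor
    · rintro ⟨⟨h, hmin, hmax⟩, hn1⟩
      have h2 : (n + 2) ∈ F := hmax ▸ F.max'_mem h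
      have hcard2 := S_card_le ⟨h, hmin, hmax⟩
      have hcpos := h.card_pos
      refine ⟨insert (n + 1) (F.erase (n + 2)), ?_, ?_⟩
      · have hne : (insert (n + 1) (F.erase (n + 2))).Nonempty := Finset.insert_nonempty _ _
        have hn1e : (n + 1) ∉ F.erase (n + 2) := fun hc => hn1 (Finset.mem_of_mem_erase hc)
        have hcard : (insert (n + 1) (F.erase (n + 2))).card = F.card := by
          rw [Finset.card_insert_of_notMem hn1e, Finset.card_erase_of_mem h2]
          omega
        refine ⟨hne, ?_, ?_⟩
        · rw [hcard]
          apply Finset.le_min'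
          intro y hy
          rcases Finset.mem_insert.mp hy with rfl | hy
          · omega
          · exact le_trans hmin (F.min'_le y (Finset.mem_of_mem_erase hy))
        · apply le_antisymm
          · apply Finset.max'_le
            intro y hy
            rcases Finset.mem_insert.mp hy with rfl | hy
            · exact le_refl _
            · have hyF := Finset.mem_of_mem_erase hy
              have : y ≤ n + 2 := hmax ▸ Finset.le_max' _ _ hyF
              have hyne : y ≠ n + 2 := Finset.ne_of_mem_erase hy
              omega
          · exact Finset.le_max' _ _ (Finset.mem_insert_self _ _)
      · show insert (n + 2) ((insert (n + 1) (F.erase (n + 2))).erase (n + 1)) = F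
        rw [Finset.erase_insert (fun hc => hn1 (Finset.mem_of_mem_erase hc)),
          Finset.insert_erase h2]
    · rintro ⟨G, ⟨h, hmin, hmax⟩, rfl⟩
      have h1 : (n + 1) ∈ G := hmax ▸ G.max'_mem h
      have hsub := S_subset ⟨h, hmin, hmax⟩
      have h2nG : (n + 2) ∉ G.erase (n + 1) := by
        intro hc
        have := hsub (Finset.mem_of_mem_erase hc)
        simp [Finset.mem_range] at this
      have hcard : (insert (n + 2) (G.erase (n + 1))).card = G.card := by
        rw [Finset.card_insert_of_notMem h2nG, Finset.card_erase_of_mem h1]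
        have := h.card_pos; omega
      have hGle : G.card ≤ n + 2 := by
        have := S_card_le ⟨h, hmin, hmax⟩; omega
      constructor
      · refine ⟨Finset.insert_nonempty _ _, ?_, ?_⟩
        · rw [hcard]
          apply Finset.le_min'
          intro y hy
          rcases Finset.mem_insert.mp hy with rfl | hy
          · exact hGle
          · exact le_trans hmin (G.min'_le y (Finset.mem_of_mem_erase hy))
        · apply le_antisymm
          · apply Finset.max'_le
            intro y hy
            rcases Finset.mem_insert.mp hy with rfl | hy
            · exact le_refl _
            · have := hsub (Finset.mem_of_mem_erase hy)
              simp [Finset.mem_range] at this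
              omega
          · exact Finset.le_max' _ _ (Finset.mem_insert_self _ _)
      · intro hc
        rcases Finset.mem_insert.mp hc with hc | hc
        · omega
        · exact (Finset.ne_of_mem_erase hc) rfl
  have hAinj : Set.InjOn (fun F => insert (n + 2) (F.erase (n + 1))) (S (n + 1)) := by
    rintro G1 ⟨h1, _, hmax1⟩ G2 ⟨h2, _, hmax2⟩ heq
    have hm1 : (n + 1) ∈ G1 := hmax1 ▸ G1.max'_mem h1
    have hm2 : (n + 1) ∈ G2 := hmax2 ▸ G2.max'_mem h2
    have hn2a : (n + 2) ∉ G1.erase (n + 1) := by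
      intro hc
      have := S_subset ⟨h1, ‹_›, hmax1⟩ (Finset.mem_of_mem_erase hc)
      simp [Finset.mem_range] at this
    have hn2b : (n + 2) ∉ G2.erase (n + 1) := by
      intro hc
      have := S_subset ⟨h2, ‹_›, hmax2⟩ (Finset.mem_of_mem_erase hc)
      simp [Finset.mem_range] at this
    have : G1.erase (n + 1) = G2.erase (n + 1) := by
      have := congrArg (fun s => Finset.erase s (n + 2)) heq
      simpa [Finset.erase_insert hn2a, Finset.erase_insert hn2b] using this
    calc G1 = insert (n + 1) (G1.erase (n + 1)) := (Finset.insert_erase hm1).symm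
      _ = insert (n + 1) (G2.erase (n + 1)) := by rw [this]
      _ = G2 := Finset.insert_erase hm2
  -- bijection S n → B
  have hB : B = (fun G => insert (n + 2) (G.image (· + 1))) '' (S n) := by
    ext F
    constructor
    · rintro ⟨⟨h, hmin, hmax⟩, hn1⟩
      have h2 : (n + 2) ∈ F := hmax ▸ F.max'_mem h
      have hcard2 : 2 ≤ F.card := by
        have : ({n + 1, n + 2} : Finset ℕ) ⊆ F := by
          intro x hx; simp at hx; rcases hx with rfl | rfl <;> assumption
        have := Finset.card_le_card this
        rwa [Finset.card_insert_of_notMem (by simp), Finset.card_singleton] at this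
      have hmin2 : 2 ≤ F.min' h := le_trans hcard2 hmin
      have hge2 : ∀ x ∈ F, 2 ≤ x := fun x hx => le_trans hmin2 (F.min'_le x hx)
      refine ⟨(F.erase (n + 2)).image (· - 1), ?_, ?_⟩
      · have hn1e : (n + 1) ∈ F.erase (n + 2) := Finset.mem_erase.mpr ⟨by omega, hn1⟩
        have hnmem : n ∈ (F.erase (n + 2)).image (· - 1) :=
          Finset.mem_image.mpr ⟨n + 1, hn1e, rfl⟩
        have hne : ((F.erase (n + 2)).image (· - 1)).Nonempty := ⟨n, hnmem⟩
        have hinjOn : Set.InjOn (· - 1) (F.erase (n + 2)) := by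
          intro a ha b hb hab
          have ha2 := hge2 a (Finset.mem_of_mem_erase ha)
          have hb2 := hge2 b (Finset.mem_of_mem_erase hb)
          simp only at hab
          omega
        have hcard : ((F.erase (n + 2)).image (· - 1)).card = F.card - 1 := by
          rw [Finset.card_image_of_injOn hinjOn, Finset.card_erase_of_mem h2]
        refine ⟨hne, ?_, ?_⟩
        · rw [hcard]
          apply Finset.le_min'
          intro y hy
          obtain ⟨x, hx, rfl⟩ := Finset.mem_image.mp hy
          have := le_trans hmin (F.min'_le x (Finset.mem_of_mem_erase hx))
          omega
        · apply le_antisymm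
          · apply Finset.max'_le
            intro y hy
            obtain ⟨x, hx, rfl⟩ := Finset.mem_image.mp hy
            have hx2 : x ≤ n + 2 := hmax ▸ Finset.le_max' _ _ (Finset.mem_of_mem_erase hx)
            have := Finset.ne_of_mem_erase hx
            omega
          · exact Finset.le_max' _ _ hnmem
      · simp only
        rw [Finset.image_image]
        have : (F.erase (n + 2)).image ((· + 1) ∘ (· - 1)) = F.erase (n + 2) := by
          have : ∀ x ∈ F.erase (n + 2), ((· + 1) ∘ (· - 1)) x = id x := by
            intro x hx
            have := hge2 x (Finset.mem_of_mem_erase hx)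
            simp; omega
          rw [Finset.image_congr this, Finset.image_id]
        rw [this, Finset.insert_erase h2]
    · rintro ⟨G, ⟨h, hmin, hmax⟩, rfl⟩
      have hsub := S_subset ⟨h, hmin, hmax⟩
      have hle : ∀ x ∈ G, x ≤ n := fun x hx => hmax ▸ Finset.le_max' _ _ hx
      have hnG : n ∈ G := hmax ▸ G.max'_mem h
      have h2ni : (n + 2) ∉ G.image (· + 1) := by
        intro hc
        obtain ⟨x, hx, hxe⟩ := Finset.mem_image.mp hc
        have := hle x hx; omega
      have hcard : (insert (n + 2) (G.image (· + 1))).card = G.card + 1 := by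
        rw [Finset.card_insert_of_notMem h2ni,
          Finset.card_image_of_injective _ (add_left_injective 1)]
      have hGcard := S_card_le ⟨h, hmin, hmax⟩
      constructor
      · refine ⟨Finset.insert_nonempty _ _, ?_, ?_⟩
        · rw [hcard]
          apply Finset.le_min'
          intro y hy
          rcases Finset.mem_insert.mp hy with rfl | hy
          · omega
          · obtain ⟨x, hx, rfl⟩ := Finset.mem_image.mp hy
            have := le_trans hmin (G.min'_le x hx)
            omega
        · apply le_antisymm
          · apply Finset.max'_le
            intro y hy
            rcases Finset.mem_insert.mp hy with rfl | hy
            · exact le_refl _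
            · obtain ⟨x, hx, rfl⟩ := Finset.mem_image.mp hy
              have := hle x hx; omega
          · exact Finset.le_max' _ _ (Finset.mem_insert_self _ _)
      · exact Finset.mem_insert.mpr (Or.inr (Finset.mem_image.mpr ⟨n, hnG, rfl⟩))
  have hBinj : Set.InjOn (fun G => insert (n + 2) (G.image (· + 1))) (S n) := by
    rintro G1 hG1 G2 hG2 heq
    have hni : ∀ {G : Finset ℕ}, G ∈ S n → (n + 2) ∉ G.image (· + 1) := by
      rintro G ⟨h, hmin, hmax⟩ hc
      obtain ⟨x, hx, hxe⟩ := Finset.mem_image.mp hc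
      have : x ≤ n := hmax ▸ Finset.le_max' _ _ hx
      omega
    have : G1.image (· + 1) = G2.image (· + 1) := by
      have := congrArg (fun s => Finset.erase s (n + 2)) heq
      simpa [Finset.erase_insert (hni hG1), Finset.erase_insert (hni hG2)] using this
    exact Finset.image_injective (add_left_injective 1) this
  rw [hunion, Set.ncard_union_eq hdisj hAfin hBfin, hA, hB,
    Set.ncard_image_of_injOn hAinj, Set.ncard_image_of_injOn hBinj]

theorem stmt_2 :
    (S 1).ncard = 1 ∧ (S 2).ncard = 1 ∧
      (∀ n : ℕ, 0 < n → (S (n + 2)).ncard = (S (n + 1)).ncard + (S n).ncard) ∧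
      (∀ n : ℕ, 0 < n → (S n).ncard = Nat.fib n) := by
  have h1 : (S 1).ncard = 1 := by rw [S_one]; exact Set.ncard_singleton _
  have h2 : (S 2).ncard = 1 := by rw [S_two]; exact Set.ncard_singleton _
  refine ⟨h1, h2, fun n _ => S_rec n, ?_⟩
  intro n
  induction n using Nat.strong_induction_on with
  | _ n ih =>
    intro hn
    match n with
    | 1 => simpa using h1
    | 2 => simpa using h2
    | (m + 3) =>
      rw [show m + 3 = (m + 1) + 2 by ring, S_rec (m + 1),
        ih (m + 2) (by omega) (by omega), ih (m + 1) (by omega) (by omega)]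
      exact (Nat.add_comm _ _).trans (Nat.fib_add_two).symm
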